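/- Suppose K is algebraically closed of characteristic p > 0, and let α, s, t ∈ ℕ satisfy p^α = sf + tg. Then the zero set in K^{2n} of ker φ equals the set of common zeros of the n binomials F₁, …, F_{n−1}, F_{n,p}; that is, V is a set-theoretic complete intersection on binomials in characteristic p. -/

import Mathlib

open MvPolynomial

private lemma expA' {M : Type*} [CommMonoid M] (x y : M) (f g : ℕ) :
    (x ^ (f - g) * y ^ (f - g)) ^ (f * g) =
      (x ^ (f * g)) ^ (f - g) * (y ^ (f * g)) ^ (f - g) := by
  rw [mul_pow, ← pow_mul, ← pow_mul, ← pow_mul, ← pow_mul, Nat.mul_comm]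

private lemma bezout' (d m : ℕ) (hm : 1 < m) (h : Nat.Coprime d m) :
    ∃ a b, d * a = m * b + 1 := by
  obtain ⟨a, -, ha⟩ := Nat.exists_mul_mod_eq_one_of_coprime h hm
  refine ⟨a, d * a / m, ?_⟩
  have := Nat.div_add_mod (d * a) m
  omega

private lemma pow_solve {K : Type*} [Field K] (x v : K) (hx : x ≠ 0) (D M b1 b2 : ℕ)
    (hbez : D * b1 = M * b2 + 1) (hv : v ^ M = x ^ D) :
    (v ^ b1 * (x ^ b2)⁻¹) ^ M = x ∧ (v ^ b1 * (x ^ b2)⁻¹) ^ D = v := by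
  have hxp : ∀ m : ℕ, x ^ m ≠ 0 := fun m => pow_ne_zero _ hx
  constructor
  · have h1 : (v ^ b1) ^ M = x ^ (M * b2) * x := by
      rw [← pow_mul, Nat.mul_comm b1 M, pow_mul, hv, ← pow_mul, hbez, pow_succ]
    rw [mul_pow, h1, inv_pow, ← pow_mul, Nat.mul_comm b2 M, mul_right_comm,
      mul_inv_cancel₀ (hxp _), one_mul]
  · have h1 : (v ^ b1) ^ D = x ^ (D * b2) * v := by
      rw [← pow_mul, Nat.mul_comm b1 D, hbez, pow_succ, pow_mul, hv, ← pow_mul]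
    rw [mul_pow, h1, inv_pow, ← pow_mul, Nat.mul_comm b2 D, mul_right_comm,
      mul_inv_cancel₀ (hxp _), one_mul]

private lemma expB' {M : Type*} [CommMonoid M] (n f g s t : ℕ) (hn : 3 ≤ n) (hg : 0 < g)
    (hgf : g < f) (hng : (n - 1) * f ≤ n * g) (v : Fin (n - 1) → M) (w : M) :
    ((∏ i, v i ^ g ^ 2) * w ^ (g * ((n - 1) * g - (n - 2) * f))) ^ (s * f + t * g) =
      (∏ i, v i ^ (f * g)) ^ (s * g + t * (2 * g - f)) *
      (w ^ (f * g)) ^ (s * ((n - 1) * g - (n - 2) * f) + t * (n * g - (n - 1) * f)) *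
      (∏ i, v i ^ (f - g) * w ^ (f - g)) ^ (t * g * (f - g)) := by
  obtain ⟨d, hd⟩ := Nat.le.dest hgf.le
  have hd0 : 0 < d := by omega
  subst hd
  obtain ⟨k, hk⟩ : ∃ k, n = k + 2 := ⟨n - 2, by omega⟩
  subst hk
  have hng' : (k + 1) * (g + d) ≤ (k + 2) * g := hng
  have hkd : (k + 1) * d ≤ g := by
    have h1 : (k + 1) * (g + d) = (k + 1) * g + (k + 1) * d := by ring
    have h2 : (k + 2) * g = (k + 1) * g + g := by ring
    omega
  obtain ⟨q, hq⟩ := Nat.le.dest hkd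
  subst hq
  have e1 : (k + 1) * d + q + d - ((k + 1) * d + q) = d := by
    rw [Nat.add_sub_cancel_left]
  have e2 : 2 * ((k + 1) * d + q) - ((k + 1) * d + q + d) = k * d + q := by
    have h : 2 * ((k + 1) * d + q) = (k * d + q) + ((k + 1) * d + q + d) := by ring
    rw [h, Nat.add_sub_cancel]
  have e3 : (k + 2) * ((k + 1) * d + q) - (k + 2 - 1) * ((k + 1) * d + q + d) = q := by
    show (k + 2) * ((k + 1) * d + q) - (k + 1) * ((k + 1) * d + q + d) = q
    have h : (k + 2) * ((k + 1) * d + q) = q + (k + 1) * ((k + 1) * d + q + d) := by ring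
    rw [h, Nat.add_sub_cancel]
  have e4 : (k + 2 - 1) * ((k + 1) * d + q) - (k + 2 - 2) * ((k + 1) * d + q + d) = d + q := by
    show (k + 1) * ((k + 1) * d + q) - k * ((k + 1) * d + q + d) = d + q
    have h : (k + 1) * ((k + 1) * d + q) = (d + q) + k * ((k + 1) * d + q + d) := by ring
    rw [h, Nat.add_sub_cancel]
  rw [e1, e2, e3, e4]
  have hcard : (Finset.univ : Finset (Fin (k + 2 - 1))).card = k + 1 := by simp
  rw [Finset.prod_pow, Finset.prod_pow, Finset.prod_mul_distrib, Finset.prod_pow,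
    Finset.prod_const, hcard]
  rw [mul_pow, mul_pow, ← pow_mul, ← pow_mul, ← pow_mul, ← pow_mul, ← pow_mul, ← pow_mul]
  rw [mul_mul_mul_comm, ← pow_add, ← pow_mul, ← pow_add]
  congr 2 <;> ring

/-- In the setting of the paper (`n ≥ 3`, coprime `f > g > 0`,
`(n-1)f ≤ ng`), suppose `K` is algebraically closed of characteristic `p > 0` and
`p^α = sf + tg`. Then the zero set in `K^{2n}` of `ker φ` is the set of common zeros of
the `n` binomials `F₁, …, F_{n-1}, F_{n,p}`; i.e. `V` is a set-theoretic complete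
intersection on binomials in characteristic `p`. -/
theorem stmt10 (n : ℕ) (hn : 3 ≤ n) (f g : ℕ) (hco : Nat.Coprime f g)
    (hg : 0 < g) (hgf : g < f) (hng : (n - 1) * f ≤ n * g)
    (K : Type*) [Field K] [IsAlgClosed K]
    (p : ℕ) (hp : p.Prime) [CharP K p] (α s t : ℕ) (hpst : p ^ α = s * f + t * g)
    (φ : MvPolynomial (Fin n ⊕ Fin n) K →ₐ[K] MvPolynomial (Fin n) K)
    (hφx : ∀ i : Fin n, φ (X (Sum.inl i)) = X i ^ (f * g))
    (hφy : ∀ i : Fin (n - 1), φ (X (Sum.inr (Fin.castLE (by omega) i))) =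
      X (Fin.castLE (by omega) i : Fin n) ^ (f - g) * X (⟨n - 1, by omega⟩ : Fin n) ^ (f - g))
    (hφyn : φ (X (Sum.inr (⟨n - 1, by omega⟩ : Fin n))) =
      (∏ i : Fin (n - 1), X (Fin.castLE (by omega) i : Fin n) ^ g ^ 2) *
        X (⟨n - 1, by omega⟩ : Fin n) ^ (g * ((n - 1) * g - (n - 2) * f))) :
    {a : Fin n ⊕ Fin n → K | ∀ F ∈ RingHom.ker φ, eval a F = 0} =
    {a : Fin n ⊕ Fin n → K |
      (∀ i : Fin (n - 1),
        eval a (X (Sum.inr (Fin.castLE (by omega) i : Fin n)) ^ (f * g) -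
          X (Sum.inl (Fin.castLE (by omega) i : Fin n)) ^ (f - g) *
            X (Sum.inl (⟨n - 1, by omega⟩ : Fin n)) ^ (f - g) :
          MvPolynomial (Fin n ⊕ Fin n) K) = 0) ∧
      eval a (X (Sum.inr (⟨n - 1, by omega⟩ : Fin n)) ^ (p ^ α) -
        (∏ i : Fin (n - 1), X (Sum.inl (Fin.castLE (by omega) i : Fin n))) ^
            (s * g + t * (2 * g - f)) *
          X (Sum.inl (⟨n - 1, by omega⟩ : Fin n)) ^
            (s * ((n - 1) * g - (n - 2) * f) + t * (n * g - (n - 1) * f)) *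
          (∏ i : Fin (n - 1), X (Sum.inr (Fin.castLE (by omega) i : Fin n))) ^
            (t * g * (f - g)) :
        MvPolynomial (Fin n ⊕ Fin n) K) = 0} := by
  haveI := Fact.mk hp
  have hn1 : n - 1 ≤ n := by omega
  have hfg0 : 0 < f * g := Nat.mul_pos (by omega) hg
  have hd0 : 0 < f - g := by omega
  have hPne : p ^ α ≠ 0 := pow_ne_zero _ hp.pos.ne'
  -- Frobenius injectivity
  have frob : ∀ x y : K, x ^ p ^ α = y ^ p ^ α → x = y := by
    intro x y h
    have h2 : (x - y) ^ p ^ α = 0 := by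
      rw [sub_pow_char_pow, h, sub_self]
    exact sub_eq_zero.mp (pow_eq_zero_iff hPne |>.mp h2)
  ext a
  simp only [Set.mem_setOf_eq]
  constructor
  · intro ha
    constructor
    · intro i
      refine ha _ ?_
      rw [RingHom.mem_ker, map_sub, map_pow, map_mul, map_pow, map_pow, hφx, hφx, hφy,
        expA', sub_self]
    · refine ha _ ?_
      rw [RingHom.mem_ker, map_sub, map_pow, map_mul, map_mul, map_pow, map_pow, map_pow,
        map_prod, map_prod, hφx, hφyn]
      simp only [hφx, hφy]
      rw [hpst, expB' n f g s t hn hg hgf hng, sub_self]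
  · rintro ⟨h1, h2⟩
    -- scalar form of the hypotheses
    have hy : ∀ i : Fin (n - 1),
        a (Sum.inr (Fin.castLE hn1 i)) ^ (f * g) =
          a (Sum.inl (Fin.castLE hn1 i)) ^ (f - g) *
            a (Sum.inl (⟨n - 1, by omega⟩ : Fin n)) ^ (f - g) := by
      intro i
      have := h1 i
      simpa [sub_eq_zero] using this
    have hyn : a (Sum.inr (⟨n - 1, by omega⟩ : Fin n)) ^ p ^ α =
        (∏ i : Fin (n - 1), a (Sum.inl (Fin.castLE hn1 i))) ^ (s * g + t * (2 * g - f)) *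
          a (Sum.inl (⟨n - 1, by omega⟩ : Fin n)) ^
            (s * ((n - 1) * g - (n - 2) * f) + t * (n * g - (n - 1) * f)) *
          (∏ i : Fin (n - 1), a (Sum.inr (Fin.castLE hn1 i))) ^ (t * g * (f - g)) := by
      simpa [sub_eq_zero] using h2
    -- construct the parameter point u
    obtain ⟨un, hun⟩ := IsAlgClosed.exists_pow_nat_eq (a (Sum.inl (⟨n - 1, by omega⟩ : Fin n)))
      hfg0
    have H : ∀ i : Fin (n - 1), ∃ c : K,
        c ^ (f * g) = a (Sum.inl (Fin.castLE hn1 i)) ∧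
        c ^ (f - g) * un ^ (f - g) = a (Sum.inr (Fin.castLE hn1 i)) := by
      intro i
      set x := a (Sum.inl (Fin.castLE hn1 i)) with hxdef
      set y := a (Sum.inr (Fin.castLE hn1 i)) with hydef
      set xn := a (Sum.inl (⟨n - 1, by omega⟩ : Fin n)) with hxndef
      have hyi : y ^ (f * g) = x ^ (f - g) * xn ^ (f - g) := hy i
      by_cases hx : x = 0
      · refine ⟨0, by simp [zero_pow hfg0.ne', hx], ?_⟩
        have : y ^ (f * g) = 0 := by rw [hyi, hx, zero_pow hd0.ne', zero_mul]
        rw [zero_pow hd0.ne', zero_mul, eq_comm]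
        exact pow_eq_zero_iff hfg0.ne' |>.mp this
      by_cases hxn : xn = 0
      · have hun0 : un = 0 := by
          have : un ^ (f * g) = 0 := by rw [hun, hxn]
          exact pow_eq_zero_iff hfg0.ne' |>.mp this
        have hy0 : y = 0 := by
          have : y ^ (f * g) = 0 := by rw [hyi, hxn, zero_pow hd0.ne', mul_zero]
          exact pow_eq_zero_iff hfg0.ne' |>.mp this
        obtain ⟨c, hc⟩ := IsAlgClosed.exists_pow_nat_eq x hfg0
        exact ⟨c, hc, by rw [hun0, zero_pow hd0.ne', mul_zero, hy0]⟩
      -- generic case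
      have hun0 : un ≠ 0 := fun h0 => hxn (by rw [← hun, h0, zero_pow hfg0.ne'])
      have hy0 : y ≠ 0 := by
        intro h0
        apply hx
        have : x ^ (f - g) * xn ^ (f - g) = 0 := by rw [← hyi, h0, zero_pow hfg0.ne']
        rcases mul_eq_zero.mp this with h | h
        · exact pow_eq_zero_iff hd0.ne' |>.mp h
        · exact absurd (pow_eq_zero_iff hd0.ne' |>.mp h) hxn
      set v := y * (un ^ (f - g))⁻¹ with hvdef
      have hunfg : (un ^ (f - g)) ≠ 0 := pow_ne_zero _ hun0
      have hxnd : xn ^ (f - g) ≠ 0 := pow_ne_zero _ hxn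
      have hv : v ^ (f * g) = x ^ (f - g) := by
        have hh : (un ^ (f - g)) ^ (f * g) = xn ^ (f - g) := by
          rw [← pow_mul, Nat.mul_comm (f - g) (f * g), pow_mul, hun]
        rw [hvdef, mul_pow, inv_pow, hh, hyi, mul_inv_cancel_right₀ hxnd]
      -- Bezout
      have hdfg : Nat.Coprime (f - g) (f * g) := by
        have h1 : Nat.Coprime (f - g) g := by
          rw [Nat.coprime_sub_self_left hgf.le]
          exact hco
        have h2 : Nat.Coprime (f - g) f := by
          have h3 := Nat.coprime_add_self_right.mpr h1
          rwa [show g + (f - g) = f from by omega] at h3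
        exact Nat.Coprime.mul_right h2 h1
      obtain ⟨b1, b2, hbez⟩ := bezout' (f - g) (f * g) (by nlinarith) hdfg
      obtain ⟨hc1, hc2⟩ := pow_solve x v hx (f - g) (f * g) b1 b2 hbez hv
      refine ⟨v ^ b1 * (x ^ b2)⁻¹, hc1, ?_⟩
      rw [hc2, hvdef, inv_mul_cancel_right₀ hunfg]
    choose uu huu1 huu2 using H
    set u : Fin n → K := fun j =>
      if h : (j : ℕ) < n - 1 then uu ⟨j, h⟩ else un with hudef
    have hu_cast : ∀ i : Fin (n - 1), u (Fin.castLE hn1 i) = uu i := by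
      intro i
      have h : ((Fin.castLE hn1 i : Fin n) : ℕ) < n - 1 := i.2
      rw [hudef]
      simp only [dif_pos h]
      congr 1
    have hu_last : u (⟨n - 1, by omega⟩ : Fin n) = un := by
      rw [hudef]
      simp
    have hXval : ∀ w : Fin n ⊕ Fin n, eval u (φ (X w)) = a w := by
      rintro (j | j)
      · rw [hφx, map_pow, eval_X]
        by_cases hj : (j : ℕ) < n - 1
        · have hje : j = Fin.castLE hn1 (⟨j, hj⟩ : Fin (n - 1)) := by
            apply Fin.ext; rfl
          rw [hje, hu_cast]
          exact huu1 _
        · have hje : j = (⟨n - 1, by omega⟩ : Fin n) := by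
            apply Fin.ext
            have := j.2
            simp only []
            omega
          rw [hje, hu_last]
          exact hun
      · by_cases hj : (j : ℕ) < n - 1
        · have hje : j = Fin.castLE hn1 (⟨j, hj⟩ : Fin (n - 1)) := by
            apply Fin.ext; rfl
          rw [hje, hφy, map_mul, map_pow, map_pow, eval_X, eval_X, hu_cast, hu_last]
          exact huu2 _
        · have hje : j = (⟨n - 1, by omega⟩ : Fin n) := by
            apply Fin.ext
            have := j.2
            simp only []
            omega
          rw [hje, hφyn]
          simp only [map_mul, map_prod, map_pow, eval_X]
          simp only [hu_cast, hu_last]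
          apply frob
          rw [hyn]
          simp only [← huu1, ← huu2, ← hun]
          rw [hpst]
          exact expB' n f g s t hn hg hgf hng uu un
    intro F hF
    have hhom : (eval a : MvPolynomial (Fin n ⊕ Fin n) K →+* K) =
        (eval u).comp φ.toRingHom := by
      apply MvPolynomial.ringHom_ext
      · intro c
        simp only [RingHom.comp_apply, AlgHom.toRingHom_eq_coe, RingHom.coe_coe, eval_C]
        rw [← MvPolynomial.algebraMap_eq, AlgHom.commutes]
        simp [MvPolynomial.algebraMap_eq]
      · intro w
        simp only [RingHom.comp_apply, AlgHom.toRingHom_eq_coe, RingHom.coe_coe, eval_X]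
        exact (hXval w).symm
    have hφF : φ F = 0 := RingHom.mem_ker.mp hF
    have : eval a F = eval u (φ F) := by
      rw [hhom]
      rfl
    rw [this, hφF, map_zero]
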